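/- The bondage number of the complete graph K_n (n ≥ 2) equals ⌈n/2⌉. -/

import Mathlib

open SimpleGraph

variable {V : Type*}

/-- `S` is a dominating set of `G`: every vertex is in `S` or has a neighbor in `S`. -/
def SimpleGraph.IsDomSet (G : SimpleGraph V) (S : Finset V) : Prop :=
  ∀ v : V, v ∈ S ∨ ∃ u ∈ S, G.Adj u v

/-- The domination number of a finite graph. -/
noncomputable def SimpleGraph.domNum [Fintype V] (G : SimpleGraph V) : ℕ :=
  sInf {n | ∃ S : Finset V, S.card = n ∧ G.IsDomSet S}

/-- The bondage number: the minimum size of a set of edges of `G` whose removal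
increases the domination number. -/
noncomputable def SimpleGraph.bondageNum [Fintype V] (G : SimpleGraph V) : ℕ :=
  sInf {n | ∃ B : Finset (Sym2 V), B.card = n ∧ ↑B ⊆ G.edgeSet ∧
    G.domNum < (G.deleteEdges ↑B).domNum}

/-- The endpoints of an element of `Sym2 V` as a `Finset`. -/
def sym2Ends [DecidableEq V] (e : Sym2 V) : Finset V :=
  Sym2.lift ⟨fun a b => {a, b}, fun a b => Finset.pair_comm a b⟩ e

lemma mem_sym2Ends [DecidableEq V] (v : V) (e : Sym2 V) :
    v ∈ sym2Ends e ↔ v ∈ e := by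
  induction e using Sym2.ind with
  | _ a b => simp [sym2Ends, Sym2.mem_iff]

lemma sym2Ends_card_le [DecidableEq V] (e : Sym2 V) : (sym2Ends e).card ≤ 2 := by
  induction e using Sym2.ind with
  | _ a b =>
    classical
    calc (sym2Ends s(a, b)).card = ({a, b} : Finset V).card := rfl
    _ ≤ ({b} : Finset V).card + 1 := Finset.card_insert_le a {b}
    _ ≤ 2 := by simp

lemma domNum_set_nonempty [Fintype V] (G : SimpleGraph V) :
    {n | ∃ S : Finset V, S.card = n ∧ G.IsDomSet S}.Nonempty :=
  ⟨Finset.univ.card, Finset.univ, rfl, fun v => Or.inl (Finset.mem_univ v)⟩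

lemma domNum_le_card [Fintype V] (G : SimpleGraph V) {S : Finset V} (h : G.IsDomSet S) :
    G.domNum ≤ S.card := Nat.sInf_le ⟨S, rfl, h⟩

lemma exists_min_domset [Fintype V] (G : SimpleGraph V) :
    ∃ S : Finset V, S.card = G.domNum ∧ G.IsDomSet S :=
  Nat.sInf_mem (domNum_set_nonempty G)

lemma one_lt_domNum [Fintype V] [Nonempty V] {G : SimpleGraph V}
    (h : ∀ v : V, ∃ u : V, u ≠ v ∧ ¬ G.Adj v u) : 1 < G.domNum := by
  obtain ⟨S, hcard, hS⟩ := exists_min_domset G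
  rw [← hcard]
  by_contra hle
  push_neg at hle
  have hS1 : ∀ a ∈ S, ∀ b ∈ S, a = b := Finset.card_le_one.mp hle
  rcases S.eq_empty_or_nonempty with rfl | ⟨u, hu⟩
  · obtain ⟨v⟩ := ‹Nonempty V›
    rcases hS v with hv | ⟨x, hx, _⟩
    · simp at hv
    · simp at hx
  · obtain ⟨w, hw, hnadj⟩ := h u
    rcases hS w with hw' | ⟨x, hx, hadj⟩
    · exact hw (hS1 w hw' u hu)
    · exact hnadj ((hS1 x hx u hu) ▸ hadj)

theorem bondage_complete (n : ℕ) (hn : 2 ≤ n) :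
    (⊤ : SimpleGraph (Fin n)).bondageNum = (n + 1) / 2 := by
  classical
  have npos : 0 < n := by omega
  haveI : Nonempty (Fin n) := ⟨⟨0, npos⟩⟩
  -- domination number of the complete graph is 1
  have hdom : (⊤ : SimpleGraph (Fin n)).domNum = 1 := by
    have hle : (⊤ : SimpleGraph (Fin n)).domNum ≤ 1 := by
      have := domNum_le_card (⊤ : SimpleGraph (Fin n)) (S := {⟨0, npos⟩}) ?_
      · simpa using this
      · intro v
        by_cases hv : v = ⟨0, npos⟩
        · exact Or.inl (by simp [hv])
        · exact Or.inr ⟨⟨0, npos⟩, Finset.mem_singleton_self _, by simp [Ne.symm hv]⟩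
    have hne : (⊤ : SimpleGraph (Fin n)).domNum ≠ 0 := by
      intro h0
      obtain ⟨S, hcard, hS⟩ := exists_min_domset (⊤ : SimpleGraph (Fin n))
      rw [h0, Finset.card_eq_zero] at hcard
      subst hcard
      rcases hS ⟨0, npos⟩ with hv | ⟨x, hx, _⟩
      · simp at hv
      · simp at hx
    omega
  -- the construction: pair up the vertices
  set f : ℕ → Sym2 (Fin n) := fun i =>
    s((⟨2 * i % n, Nat.mod_lt _ npos⟩ : Fin n), (⟨(2 * i + 1) % n, Nat.mod_lt _ npos⟩ : Fin n))
    with hf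
  set B : Finset (Sym2 (Fin n)) := (Finset.range ((n + 1) / 2)).image f with hB
  have hcover : ∀ v : Fin n, ∃ e ∈ B, v ∈ e := by
    intro v
    refine ⟨f (v.val / 2), Finset.mem_image_of_mem f (Finset.mem_range.mpr (by omega)), ?_⟩
    rw [hf]
    rw [Sym2.mem_iff]
    have hv : v.val < n := v.isLt
    rcases Nat.even_or_odd v.val with ⟨k, hk⟩ | ⟨k, hk⟩
    · left
      symm
      apply Fin.ext
      show 2 * (v.val / 2) % n = v.val
      have : 2 * (v.val / 2) = v.val := by omega
      rw [this, Nat.mod_eq_of_lt hv]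
    · right
      symm
      apply Fin.ext
      show (2 * (v.val / 2) + 1) % n = v.val
      have : 2 * (v.val / 2) + 1 = v.val := by omega
      rw [this, Nat.mod_eq_of_lt hv]
  have hedge : ↑B ⊆ (⊤ : SimpleGraph (Fin n)).edgeSet := by
    intro e he
    simp only [hB, Finset.coe_image, Set.mem_image, Finset.mem_coe, Finset.mem_range] at he
    obtain ⟨i, hi, rfl⟩ := he
    replace hi : i < (n + 1) / 2 := by simpa using hi
    rw [hf, SimpleGraph.mem_edgeSet, SimpleGraph.top_adj]
    have h2i : 2 * i < n := by omega
    intro hcontra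
    have := congrArg Fin.val hcontra
    simp only at this
    rcases Nat.lt_or_ge (2 * i + 1) n with h' | h'
    · rw [Nat.mod_eq_of_lt h2i, Nat.mod_eq_of_lt h'] at this; omega
    · have heq : 2 * i + 1 = n := by omega
      rw [Nat.mod_eq_of_lt h2i, heq, Nat.mod_self] at this; omega
  -- membership of the constructed bondage set
  have hdel : (⊤ : SimpleGraph (Fin n)).domNum
      < ((⊤ : SimpleGraph (Fin n)).deleteEdges ↑B).domNum := by
    rw [hdom]
    apply one_lt_domNum
    intro v
    obtain ⟨e, heB, hve⟩ := hcover v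
    have hnd : ¬ e.IsDiag := by
      have := hedge (Finset.mem_coe.mpr heB)
      rw [SimpleGraph.edgeSet_top, Set.mem_compl_iff, Sym2.mem_diagSet] at this
      exact this
    refine ⟨Sym2.Mem.other hve, Sym2.other_ne hnd hve, ?_⟩
    rw [SimpleGraph.deleteEdges_adj]
    push_neg
    intro _
    rw [Sym2.other_spec hve]
    exact heB
  have hmem : B.card ∈ {m | ∃ B' : Finset (Sym2 (Fin n)), B'.card = m ∧
      ↑B' ⊆ (⊤ : SimpleGraph (Fin n)).edgeSet ∧
      (⊤ : SimpleGraph (Fin n)).domNum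
        < ((⊤ : SimpleGraph (Fin n)).deleteEdges ↑B').domNum} :=
    ⟨B, rfl, hedge, hdel⟩
  have hub : (⊤ : SimpleGraph (Fin n)).bondageNum ≤ B.card := Nat.sInf_le hmem
  have hBcard : B.card ≤ (n + 1) / 2 :=
    le_trans Finset.card_image_le (by simp)
  -- lower bound: every bondage set has at least ⌈n/2⌉ edges
  have hlb : ∀ m ∈ {m | ∃ B' : Finset (Sym2 (Fin n)), B'.card = m ∧
      ↑B' ⊆ (⊤ : SimpleGraph (Fin n)).edgeSet ∧
      (⊤ : SimpleGraph (Fin n)).domNum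
        < ((⊤ : SimpleGraph (Fin n)).deleteEdges ↑B').domNum},
      (n + 1) / 2 ≤ m := by
    rintro m ⟨B', hcard, hsub, hlt⟩
    by_contra hm
    push_neg at hm
    have h2m : 2 * m ≤ n - 1 := by omega
    -- the set of covered vertices
    set C : Finset (Fin n) := B'.biUnion sym2Ends with hC
    have hCcard : C.card ≤ 2 * m := by
      calc C.card ≤ ∑ e ∈ B', (sym2Ends e).card := Finset.card_biUnion_le
      _ ≤ ∑ _e ∈ B', 2 := Finset.sum_le_sum (fun e _ => sym2Ends_card_le e)
      _ = 2 * m := by rw [Finset.sum_const, hcard]; ring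
    have : ∃ v : Fin n, v ∉ C := by
      by_contra hall
      push_neg at hall
      have : (Finset.univ : Finset (Fin n)).card ≤ C.card :=
        Finset.card_le_card (fun v _ => hall v)
      simp only [Finset.card_univ, Fintype.card_fin] at this
      omega
    obtain ⟨v, hv⟩ := this
    -- {v} dominates the deleted graph
    have hdomv : ((⊤ : SimpleGraph (Fin n)).deleteEdges ↑B').IsDomSet {v} := by
      intro u
      by_cases hu : u = v
      · exact Or.inl (by simp [hu])
      · refine Or.inr ⟨v, Finset.mem_singleton_self _, ?_⟩
        rw [SimpleGraph.deleteEdges_adj]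
        refine ⟨by simp [Ne.symm hu], ?_⟩
        intro hmemB
        apply hv
        rw [hC, Finset.mem_biUnion]
        exact ⟨s(v, u), hmemB, by rw [mem_sym2Ends]; simp⟩
    have := domNum_le_card _ hdomv
    simp only [Finset.card_singleton] at this
    omega
  have hlb' : (n + 1) / 2 ≤ (⊤ : SimpleGraph (Fin n)).bondageNum :=
    hlb _ (Nat.sInf_mem ⟨B.card, hmem⟩)
  omega
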